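/- Fix 0 < κ < 1, b_i, b_r > 0 and distinct unit vectors m_i, m_r. Define g(t) = (b_i + t - b_r)/(κ |(b_i+t) m_r - b_r m_i|) for t ∈ (-b_i, ∞). Then g is strictly increasing on (-b_i, ∞); more precisely g'(t) = b_r (b_i + t + b_r)(1 - m_i·m_r)/(κ Δ(t)³) > 0 where Δ(t) = |(b_i+t) m_r - b_r m_i|. -/

import Mathlib

open scoped RealInnerProductSpace

theorem stmt11 (κ bi br : ℝ) (hκ : 0 < κ) (hκ1 : κ < 1) (hbi : 0 < bi) (hbr : 0 < br)
    (mi mr : EuclideanSpace ℝ (Fin 3)) (hmi : ‖mi‖ = 1) (hmr : ‖mr‖ = 1) (hne : mi ≠ mr) :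
    StrictMonoOn (fun t => (bi + t - br) / (κ * ‖(bi + t) • mr - br • mi‖))
      (Set.Ioi (-bi)) ∧
    ∀ t ∈ Set.Ioi (-bi),
      HasDerivAt (fun t => (bi + t - br) / (κ * ‖(bi + t) • mr - br • mi‖))
        (br * (bi + t + br) * (1 - ⟪mi, mr⟫) / (κ * ‖(bi + t) • mr - br • mi‖ ^ 3)) t := by
  set c : ℝ := ⟪mi, mr⟫ with hc
  have hc1 : c < 1 := by
    have hle : c ≤ 1 := by
      have := real_inner_le_norm mi mr
      rw [hmi, hmr] at this; simpa using this
    rcases lt_or_eq_of_le hle with h | h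
    · exact h
    · exact absurd ((inner_eq_one_iff_of_norm_eq_one hmi hmr).mp h) hne
  set q : ℝ → ℝ := fun t => (bi + t) * (bi + t) - 2 * br * c * (bi + t) + br * br with hqdef
  have hnormsq : ∀ t : ℝ, ‖(bi + t) • mr - br • mi‖ ^ 2 = q t := by
    intro t
    rw [norm_sub_sq_real, real_inner_smul_left, real_inner_smul_right, norm_smul, norm_smul,
      real_inner_comm, hmi, hmr, ← hc]
    simp only [mul_one, Real.norm_eq_abs, sq_abs, hqdef]
    ring
  have hnorm : ∀ t : ℝ, ‖(bi + t) • mr - br • mi‖ = Real.sqrt (q t) := by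
    intro t
    rw [← hnormsq t, Real.sqrt_sq (norm_nonneg _)]
  have hqpos : ∀ t ∈ Set.Ioi (-bi), 0 < q t := by
    intro t ht
    have hs : 0 < bi + t := by simp only [Set.mem_Ioi] at ht; linarith
    have key : q t = ((bi + t) - br) ^ 2 + 2 * (bi + t) * br * (1 - c) := by ring
    nlinarith [sq_nonneg ((bi + t) - br), mul_pos (mul_pos hs hbr) (sub_pos.mpr hc1)]
  have hderiv : ∀ t ∈ Set.Ioi (-bi),
      HasDerivAt (fun t => (bi + t - br) / (κ * ‖(bi + t) • mr - br • mi‖))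
        (br * (bi + t + br) * (1 - c) / (κ * ‖(bi + t) • mr - br • mi‖ ^ 3)) t := by
    intro t ht
    have hqt : 0 < q t := hqpos t ht
    have hD : 0 < Real.sqrt (q t) := Real.sqrt_pos.mpr hqt
    have hs : HasDerivAt (fun t : ℝ => bi + t) 1 t := by
      simpa using (hasDerivAt_id t).const_add bi
    have hq' : HasDerivAt q (2 * (bi + t) - 2 * br * c) t := by
      have h1 : HasDerivAt (fun t => (bi + t) * (bi + t))
          (1 * (bi + t) + (bi + t) * 1) t := hs.mul hs
      have h2 : HasDerivAt (fun t => 2 * br * c * (bi + t)) (2 * br * c * 1) t :=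
        hs.const_mul _
      have := (h1.sub h2).add_const (br * br)
      refine this.congr_deriv ?_
      ring
    have hsq : HasDerivAt (fun t => Real.sqrt (q t))
        ((2 * (bi + t) - 2 * br * c) / (2 * Real.sqrt (q t))) t :=
      hq'.sqrt (ne_of_gt hqt)
    have hnum : HasDerivAt (fun t : ℝ => bi + t - br) 1 t := by
      simpa using hs.sub_const br
    have hden : HasDerivAt (fun t => κ * Real.sqrt (q t))
        (κ * ((2 * (bi + t) - 2 * br * c) / (2 * Real.sqrt (q t)))) t :=
      hsq.const_mul κ
    have hdenne : κ * Real.sqrt (q t) ≠ 0 := by positivity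
    have hdiv := hnum.div hden hdenne
    have hfun : (fun t => (bi + t - br) / (κ * ‖(bi + t) • mr - br • mi‖))
        = (fun t => (bi + t - br) / (κ * Real.sqrt (q t))) := by
      funext u; rw [hnorm u]
    rw [hfun, hnorm t]
    refine hdiv.congr_deriv ?_
    set D := Real.sqrt (q t) with hDdef
    have hD2 : D ^ 2 = q t := Real.sq_sqrt hqt.le
    have hDne : D ≠ 0 := ne_of_gt hD
    have hD2' : D ^ 2 = (bi + t) * (bi + t) - 2 * br * c * (bi + t) + br * br := by
      rw [hD2]
    field_simp
    linear_combination hD2'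
  constructor
  · apply StrictMonoOn.mono (s := Set.Ioi (-bi)) ?_ (le_refl _)
    apply strictMonoOn_of_deriv_pos (convex_Ioi _)
    · intro t ht
      exact ((hderiv t ht).differentiableAt).continuousAt.continuousWithinAt
    · intro t ht
      rw [interior_Ioi] at ht
      rw [(hderiv t ht).deriv]
      have hqt := hqpos t ht
      have hN : 0 < ‖(bi + t) • mr - br • mi‖ := by
        rw [hnorm t]; exact Real.sqrt_pos.mpr hqt
      have hs : 0 < bi + t := by simp only [Set.mem_Ioi] at ht; linarith
      apply div_pos
      · apply mul_pos (mul_pos hbr (by linarith)) (by linarith)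
      · positivity
  · exact hderiv
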